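/- Under the hypotheses of the reduction — C the CLUM cost after trades, M a nonempty finite set of 'satisfying' outcomes each with payout exactly k·q, and S the remaining outcomes with |S| ≤ 2^n, payouts Q_i ∈ [0,(k-1)·q], q = C₀(2^n−1), 0 < C − k·q < C₀ — the reciprocal price 1/p_ω = |M| + Σ_{i∈S}(C − kq)/(C − Q_i) satisfies ⌊1/p_ω⌋ = |M|. -/
import Mathlib


open Real Finset

theorem stmt_6 {α ι : Type*} (n k : ℕ) (hn : 1 ≤ n) (hk : 1 ≤ k)
    (C₀ : ℝ) (hC₀ : 0 < C₀) (q : ℝ) (hq : q = C₀ * (2 ^ n - 1))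
    (C : ℝ) (hCk : 0 < C - k * q) (hCk' : C - k * q < C₀)
    (M : Finset α) (hM : M.Nonempty)
    (S : Finset ι) (hS : S.card ≤ 2 ^ n)
    (Q : ι → ℝ) (hQ : ∀ i ∈ S, 0 ≤ Q i ∧ Q i ≤ ((k : ℝ) - 1) * q)
    (hCQ : ∀ i ∈ S, 0 < C - Q i) :
    ⌊(M.card : ℝ) + ∑ i ∈ S, (C - k * q) / (C - Q i)⌋ = (M.card : ℤ) := by
  have h2n : (2:ℝ) ≤ 2 ^ n := by
    calc (2:ℝ) = 2 ^ 1 := by norm_num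
    _ ≤ 2 ^ n := pow_le_pow_right₀ (by norm_num) hn
  have h2npos : (0:ℝ) < 2 ^ n := by positivity
  have hqpos : 0 < q := by rw [hq]; nlinarith
  have hbound : ∀ i ∈ S, (C - k * q) / (C - Q i) < 1 / 2 ^ n := by
    intro i hi
    have hQi := hQ i hi
    have hden : C - (k:ℝ) * q + q ≤ C - Q i := by nlinarith [hQi.2]
    have hden' : 0 < C - (k:ℝ) * q + q := by linarith
    have h1 : (C - k * q) / (C - Q i) ≤ (C - k * q) / (C - k * q + q) :=
      div_le_div_of_nonneg_left hCk.le hden' hden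
    have h2 : (C - k * q) / (C - k * q + q) < C₀ / (C₀ + q) := by
      rw [div_lt_div_iff₀ hden' (by linarith)]
      nlinarith
    have h3 : C₀ / (C₀ + q) = 1 / 2 ^ n := by
      rw [div_eq_div_iff (by linarith) (by positivity), hq]; ring
    linarith
  have hsum_nonneg : 0 ≤ ∑ i ∈ S, (C - k * q) / (C - Q i) :=
    Finset.sum_nonneg fun i hi => div_nonneg hCk.le (hCQ i hi).le
  have hsum_lt : ∑ i ∈ S, (C - k * q) / (C - Q i) < 1 := by
    rcases S.eq_empty_or_nonempty with rfl | hSne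
    · simp
    · calc ∑ i ∈ S, (C - k * q) / (C - Q i) < ∑ _i ∈ S, (1:ℝ) / 2 ^ n :=
            Finset.sum_lt_sum_of_nonempty hSne hbound
      _ = S.card * (1 / 2 ^ n) := by rw [Finset.sum_const, nsmul_eq_mul]
      _ ≤ 2 ^ n * (1 / 2 ^ n) := by
            apply mul_le_mul_of_nonneg_right _ (by positivity)
            exact_mod_cast hS
      _ = 1 := by rw [mul_one_div, div_self (ne_of_gt h2npos)]
  rw [Int.floor_eq_iff]
  constructor
  · push_cast; linarith
  · push_cast; linarith
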